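/- Let b : ℕ → ℝ be a potential, T ≥ 1, and f, g : ℕ → ℝ controls with f_t = g_t = 0 for t ≥ T. Define the odd extension f̃ : ℕ → ℝ by f̃_t = f_t for 0 ≤ t ≤ T−1, f̃_T = 0, f̃_{T+k} = −f_{T−k} for 1 ≤ k ≤ T−1, and f̃_t = 0 for t ≥ 2T. Then the connecting form is expressed through the boundary values of the solution with extended control: Σ_{n=1}^{T} u^f_{n,T} u^g_{n,T} = Σ_{τ=0}^{T−1} g_τ Σ_{k=0}^{T−1−τ} u^{f̃}_{1, τ+1+2k}. -/

import Mathlib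

/-- `sol b f t n` is the solution `u^f_{n,t}` of the discrete Schrödinger dynamical system
with potential `b` and boundary control `f`:
`u_{n,t+1} + u_{n,t-1} - u_{n+1,t} - u_{n-1,t} + b_n u_{n,t} = 0` for `n ≥ 1`, `t ≥ 0`,
`u_{n,-1} = u_{n,0} = 0` for `n ≥ 1`, and `u_{0,t} = f_t` for `t ≥ 0`
(the first argument is the time `t`, the second the space variable `n`). -/
noncomputable def sol (b f : ℕ → ℝ) : ℕ → ℕ → ℝ
  | 0, n => if n = 0 then f 0 else 0
  | 1, n => if n = 0 then f 1 else
      sol b f 0 (n + 1) + sol b f 0 (n - 1) - b n * sol b f 0 n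
  | (t + 2), n => if n = 0 then f (t + 2) else
      sol b f (t + 1) (n + 1) + sol b f (t + 1) (n - 1) - b n * sol b f (t + 1) n - sol b f t n

namespace ConnOdd

lemma sol_zero (b f : ℕ → ℝ) (n : ℕ) : sol b f 0 n = if n = 0 then f 0 else 0 := by
  simp only [sol]

lemma sol_one (b f : ℕ → ℝ) (n : ℕ) : sol b f 1 n = if n = 0 then f 1 else
    sol b f 0 (n + 1) + sol b f 0 (n - 1) - b n * sol b f 0 n := by
  simp only [sol]

lemma sol_two (b f : ℕ → ℝ) (t n : ℕ) : sol b f (t + 2) n = if n = 0 then f (t + 2) else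
    sol b f (t + 1) (n + 1) + sol b f (t + 1) (n - 1) - b n * sol b f (t + 1) n - sol b f t n := by
  simp only [sol]

lemma sol_bdry (b f : ℕ → ℝ) (t : ℕ) : sol b f t 0 = f t := by
  rcases t with _ | _ | t
  · rw [sol_zero, if_pos rfl]
  · rw [sol_one, if_pos rfl]
  · rw [sol_two, if_pos rfl]

lemma sol_speed (b f : ℕ → ℝ) : ∀ t n, t < n → sol b f t n = 0 := by
  intro t
  induction t using Nat.strong_induction_on with
  | _ t ih =>
    rcases t with _ | _ | t
    · intro n hn; rw [sol_zero, if_neg (by omega)]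
    · intro n hn
      rw [sol_one, if_neg (by omega), sol_zero, sol_zero, sol_zero,
        if_neg (by omega), if_neg (by omega), if_neg (by omega)]
      ring
    · intro n hn
      rw [show t + 1 + 1 = t + 2 from rfl] at *
      rw [sol_two, if_neg (by omega), ih (t + 1) (by omega) (n + 1) (by omega),
        ih (t + 1) (by omega) (n - 1) (by omega), ih (t + 1) (by omega) n (by omega),
        ih t (by omega) n (by omega)]
      ring

lemma sol_congr (b f g : ℕ → ℝ) : ∀ t, (∀ s, s ≤ t → f s = g s) → ∀ n, sol b f t n = sol b g t n := by
  intro t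
  induction t using Nat.strong_induction_on with
  | _ t ih =>
    rcases t with _ | _ | t
    · intro h n; rw [sol_zero, sol_zero, h 0 le_rfl]
    · intro h n
      have e0 := ih 0 (by omega) (fun s hs => h s (by omega))
      rw [sol_one, sol_one, h 1 le_rfl, e0, e0, e0]
    · intro h n
      rw [show t + 1 + 1 = t + 2 from rfl] at *
      have e1 := ih (t + 1) (by omega) (fun s hs => h s (by omega))
      have e0 := ih t (by omega) (fun s hs => h s (by omega))
      rw [sol_two, sol_two, h (t + 2) le_rfl, e1, e1, e1, e0]

lemma sol_sum (b : ℕ → ℝ) {ι : Type*} (s : Finset ι) (c : ι → ℝ) (h : ι → ℕ → ℝ) :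
    ∀ t n, sol b (fun x => ∑ i ∈ s, c i * h i x) t n = ∑ i ∈ s, c i * sol b (h i) t n := by
  intro t
  induction t using Nat.strong_induction_on with
  | _ t ih =>
    rcases t with _ | _ | t
    · intro n
      simp only [sol_zero]
      by_cases hn : n = 0 <;> simp [hn]
    · intro n
      simp only [Nat.zero_add]
      simp only [sol_one, ih 0 (by omega)]
      by_cases hn : n = 0
      · subst hn; simp
      · simp only [if_neg hn, Finset.mul_sum, ← Finset.sum_sub_distrib, ← Finset.sum_add_distrib]
        exact Finset.sum_congr rfl fun i _ => by ring
    · intro n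
      rw [show t + 1 + 1 = t + 2 from rfl] at *
      simp only [sol_two, ih (t + 1) (by omega), ih t (by omega)]
      by_cases hn : n = 0
      · subst hn; simp
      · simp only [if_neg hn, Finset.mul_sum, ← Finset.sum_sub_distrib, ← Finset.sum_add_distrib]
        exact Finset.sum_congr rfl fun i _ => by ring


lemma sol_zero' (b f : ℕ → ℝ) (n : ℕ) (hn : n ≠ 0) : sol b f 0 n = 0 := by
  rw [sol_zero, if_neg hn]

lemma sol_one' (b f : ℕ → ℝ) (n : ℕ) (hn : n ≠ 0) :
    sol b f 1 n = sol b f 0 (n + 1) + sol b f 0 (n - 1) - b n * sol b f 0 n := by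
  rw [sol_one, if_neg hn]

lemma sol_two' (b f : ℕ → ℝ) (t n : ℕ) (hn : n ≠ 0) :
    sol b f (t + 2) n = sol b f (t + 1) (n + 1) + sol b f (t + 1) (n - 1)
      - b n * sol b f (t + 1) n - sol b f t n := by
  rw [sol_two, if_neg hn]

def shift1 (f : ℕ → ℝ) : ℕ → ℝ := fun s => if s = 0 then 0 else f (s - 1)

def shiftN (τ : ℕ) (f : ℕ → ℝ) : ℕ → ℝ := fun s => if s < τ then 0 else f (s - τ)

lemma shiftN_zero (f : ℕ → ℝ) : shiftN 0 f = f := by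
  funext s; simp [shiftN]

lemma shiftN_succ (τ : ℕ) (f : ℕ → ℝ) : shiftN (τ + 1) f = shift1 (shiftN τ f) := by
  funext s
  rcases s with _ | s
  · simp [shiftN, shift1]
  · simp only [shiftN, shift1]
    rw [if_neg (show ¬(s + 1 = 0) by omega), Nat.add_sub_cancel]
    by_cases h : s < τ
    · rw [if_pos (show s + 1 < τ + 1 by omega), if_pos h]
    · rw [if_neg (show ¬(s + 1 < τ + 1) by omega), if_neg h]
      congr 1
      omega

lemma sol_shift1_zero (b f : ℕ → ℝ) (n : ℕ) : sol b (shift1 f) 0 n = 0 := by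
  rw [sol_zero]
  simp [shift1]

lemma sol_shift1 (b f : ℕ → ℝ) : ∀ t n, sol b (shift1 f) (t + 1) n = sol b f t n := by
  intro t
  induction t using Nat.strong_induction_on with
  | _ t ih =>
    rcases t with _ | _ | t
    · intro n
      by_cases hn : n = 0
      · subst hn
        rw [sol_bdry, sol_bdry]
        simp [shift1]
      · show sol b (shift1 f) 1 n = sol b f 0 n
        rw [sol_one' b _ n hn, sol_zero' b f n hn,
          sol_shift1_zero, sol_shift1_zero, sol_shift1_zero]
        ring
    · intro n
      by_cases hn : n = 0
      · subst hn
        rw [sol_bdry, sol_bdry]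
        simp [shift1]
      · show sol b (shift1 f) (0 + 2) n = sol b f 1 n
        rw [sol_two' b (shift1 f) 0 n hn, sol_one' b f n hn]
        have e0 : ∀ m, sol b (shift1 f) (0 + 1) m = sol b f 0 m := ih 0 (by omega)
        rw [e0, e0, e0, sol_shift1_zero]
        ring
    · intro n
      by_cases hn : n = 0
      · subst hn
        rw [sol_bdry, sol_bdry]
        simp [shift1]
      · show sol b (shift1 f) ((t + 1) + 2) n = sol b f (t + 2) n
        rw [sol_two' b (shift1 f) (t + 1) n hn, sol_two' b f t n hn]
        have e1 : ∀ m, sol b (shift1 f) (t + 1 + 1) m = sol b f (t + 1) m := ih (t + 1) (by omega)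
        have e0 : ∀ m, sol b (shift1 f) (t + 1) m = sol b f t m := ih t (by omega)
        rw [e1, e1, e1, e0]

lemma sol_shiftN (b f : ℕ → ℝ) :
    ∀ τ t n, sol b (shiftN τ f) t n = if τ ≤ t then sol b f (t - τ) n else 0 := by
  intro τ
  induction τ with
  | zero => intro t n; rw [shiftN_zero, if_pos (Nat.zero_le t), Nat.sub_zero]
  | succ τ ih =>
    intro t n
    rw [shiftN_succ]
    rcases t with _ | t
    · rw [sol_shift1_zero, if_neg (by omega)]
    · rw [sol_shift1, ih]
      by_cases h : τ ≤ t
      · rw [if_pos h, if_pos (by omega)]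
        congr 1
        omega
      · rw [if_neg h, if_neg (by omega)]

noncomputable def ee : ℕ → ℝ := fun t => if t = 0 then 1 else 0

lemma sol_decomp (b f : ℕ → ℝ) (t n : ℕ) :
    sol b f t n = ∑ τ ∈ Finset.range (t + 1), f τ * sol b ee (t - τ) n := by
  have h1 : sol b f t n = sol b (fun s => ∑ τ ∈ Finset.range (t + 1), f τ * shiftN τ ee s) t n := by
    apply sol_congr
    intro s hs
    symm
    rw [Finset.sum_eq_single s]
    · unfold shiftN ee
      rw [if_neg (lt_irrefl s), Nat.sub_self, if_pos rfl, mul_one]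
    · intro τ hτ hne
      unfold shiftN ee
      rcases lt_or_ge s τ with h | h
      · rw [if_pos h, mul_zero]
      · rw [if_neg (not_lt.mpr h), if_neg (by omega), mul_zero]
    · intro hs'
      exact absurd (Finset.mem_range.mpr (by omega)) hs'
  rw [h1, sol_sum]
  apply Finset.sum_congr rfl
  intro τ hτ
  rw [sol_shiftN, if_pos (by simp only [Finset.mem_range] at hτ; omega)]

noncomputable def Rk (b : ℕ → ℝ) : ℤ → ℝ := fun z => if 0 < z then sol b ee z.toNat 1 else 0

lemma R_nat (b : ℕ → ℝ) (x y : ℕ) : sol b ee (x - y) 1 = Rk b ((x : ℤ) - y) := by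
  unfold Rk
  rcases le_or_gt x y with h | h
  · rw [Nat.sub_eq_zero_of_le h, if_neg (by omega), sol_speed b ee 0 1 (by omega)]
  · rw [if_pos (by omega)]
    congr 1
    omega

lemma R_natcast (b : ℕ → ℝ) (q : ℕ) : Rk b (q : ℤ) = sol b ee q 1 := by
  have := (R_nat b q 0).symm
  simpa using this

noncomputable def Wm (b : ℕ → ℝ) (M p q : ℕ) : ℝ :=
  ∑ n ∈ Finset.Icc 1 M, sol b ee p n * sol b ee q n

lemma Wm_congr (b : ℕ → ℝ) (M M' p q : ℕ) (h : p ≤ M) (h' : p ≤ M') :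
    Wm b M p q = Wm b M' p q := by
  wlog hMM : M ≤ M' generalizing M M'
  · exact (this M' M h' h (by omega)).symm
  unfold Wm
  apply Finset.sum_subset (Finset.Icc_subset_Icc_right hMM)
  intro n hn hn'
  have hne : M < n := by
    simp only [Finset.mem_Icc] at hn hn'
    omega
  rw [sol_speed b ee p n (by omega), zero_mul]

lemma sol_rec (b f : ℕ → ℝ) (p n : ℕ) (hp : 1 ≤ p) (hn : n ≠ 0) :
    sol b f (p + 1) n + sol b f (p - 1) n
      = sol b f p (n + 1) + sol b f p (n - 1) - b n * sol b f p n := by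
  obtain ⟨p', rfl⟩ : ∃ p', p = p' + 1 := ⟨p - 1, by omega⟩
  rw [show p' + 1 + 1 = p' + 2 from rfl, sol_two' b f p' n hn, Nat.add_sub_cancel]
  ring

lemma Wm_wave (b : ℕ → ℝ) (M p q : ℕ) (hp : 1 ≤ p) (hq : 1 ≤ q)
    (hpM : p + 1 ≤ M) (hqM : q + 1 ≤ M) :
    Wm b M (p + 1) q + Wm b M (p - 1) q = Wm b M p (q + 1) + Wm b M p (q - 1) := by
  set D : ℕ → ℝ := fun n =>
    sol b ee p (n + 1) * sol b ee q n - sol b ee p n * sol b ee q (n + 1) with hD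
  have key : ∀ n ∈ Finset.Icc 1 M,
      sol b ee (p + 1) n * sol b ee q n + sol b ee (p - 1) n * sol b ee q n
        - (sol b ee p n * sol b ee (q + 1) n + sol b ee p n * sol b ee (q - 1) n)
      = D n - D (n - 1) := by
    intro n hn
    have hn1 : n ≠ 0 := by
      simp only [Finset.mem_Icc] at hn
      omega
    have e1 := sol_rec b ee p n hp hn1
    have e2 := sol_rec b ee q n hq hn1
    have hnn : (n - 1) + 1 = n := by omega
    simp only [hD, hnn]
    linear_combination sol b ee q n * e1 - sol b ee p n * e2
  have lhs_eq : Wm b M (p + 1) q + Wm b M (p - 1) q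
      - (Wm b M p (q + 1) + Wm b M p (q - 1))
      = ∑ n ∈ Finset.Icc 1 M, (D n - D (n - 1)) := by
    unfold Wm
    rw [← Finset.sum_add_distrib, ← Finset.sum_add_distrib, ← Finset.sum_sub_distrib]
    exact Finset.sum_congr rfl key
  have tele : ∑ n ∈ Finset.Icc 1 M, (D n - D (n - 1)) = D M - D 0 := by
    rw [← Finset.Ico_add_one_right_eq_Icc, Finset.sum_Ico_eq_sum_range]
    simp only [Nat.add_sub_cancel]
    have : ∀ i ∈ Finset.range M, D (1 + i) - D (1 + i - 1) = D (i + 1) - D i := by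
      intro i _
      have h1 : 1 + i = i + 1 := by omega
      have h2 : 1 + i - 1 = i := by omega
      rw [h2, h1]
    rw [Finset.sum_congr rfl this, Finset.sum_range_sub D M]
  have hDM : D M = 0 := by
    have s1 : sol b ee p (M + 1) = 0 := sol_speed b ee p (M + 1) (by omega)
    have s2 : sol b ee p M = 0 := sol_speed b ee p M (by omega)
    simp [hD, s1, s2]
  have hD0 : D 0 = 0 := by
    simp only [hD]
    rw [sol_bdry, sol_bdry]
    have h1 : ee p = 0 := by unfold ee; rw [if_neg (by omega)]
    have h2 : ee q = 0 := by unfold ee; rw [if_neg (by omega)]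
    rw [h1, h2]
    ring
  have hfin : Wm b M (p + 1) q + Wm b M (p - 1) q
      - (Wm b M p (q + 1) + Wm b M p (q - 1)) = 0 := by
    rw [lhs_eq, tele, hDM, hD0, sub_zero]
  linarith [hfin]

noncomputable def Af (b : ℕ → ℝ) (x y : ℕ) : ℝ :=
  ∑ k ∈ Finset.range y, Rk b ((x : ℤ) - y + 1 + 2 * k)

noncomputable def Bf (b : ℕ → ℝ) (x y : ℕ) : ℝ :=
  ∑ k ∈ Finset.range y, Rk b (2 * (k : ℤ) + 1 - x - y)

noncomputable def Vf (b : ℕ → ℝ) (x y : ℕ) : ℝ := Af b x y - Bf b x y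

lemma Af_shift (b : ℕ → ℝ) (x y : ℕ) :
    Af b x (y + 1) = Af b (x + 1) y + Rk b ((x : ℤ) - y) := by
  unfold Af
  rw [Finset.sum_range_succ']
  congr 1
  · apply Finset.sum_congr rfl
    intro k _
    congr 1
    push_cast
    ring
  · congr 1
    push_cast
    ring

lemma Bf_shift (b : ℕ → ℝ) (x y : ℕ) :
    Bf b x (y + 1) = Bf b (x + 1) y + Rk b ((y : ℤ) - x) := by
  unfold Bf
  rw [Finset.sum_range_succ]
  congr 1
  · apply Finset.sum_congr rfl
    intro k _
    congr 1
    push_cast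
    ring
  · congr 1
    push_cast
    ring

lemma Vf_zero (b : ℕ → ℝ) (y : ℕ) : Vf b 0 y = 0 := by
  unfold Vf Af Bf
  rw [sub_eq_zero]
  apply Finset.sum_congr rfl
  intro k _
  congr 1
  push_cast
  ring

lemma Rk_neg (b : ℕ → ℝ) (z : ℤ) (hz : z ≤ 0) : Rk b z = 0 := by
  unfold Rk
  rw [if_neg (by omega)]

lemma Vf_one (b : ℕ → ℝ) (y : ℕ) : Vf b 1 y = Rk b (y : ℤ) := by
  unfold Vf Af Bf
  rw [← Finset.sum_sub_distrib]
  simp only [Nat.cast_one]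
  set F : ℕ → ℝ := fun j => Rk b (2 * (j : ℤ) - y) with hF
  have : ∀ k ∈ Finset.range y,
      Rk b ((1 : ℤ) - y + 1 + 2 * k) - Rk b (2 * (k : ℤ) + 1 - 1 - y)
      = F (k + 1) - F k := by
    intro k _
    simp only [hF]
    congr 2 <;> push_cast <;> ring
  rw [Finset.sum_congr rfl this, Finset.sum_range_sub F y]
  simp only [hF]
  rw [Rk_neg b (2 * ((0:ℕ) : ℤ) - y) (by omega), sub_zero]
  congr 1
  ring

lemma Vf_wave (b : ℕ → ℝ) (x y : ℕ) :
    Vf b (x + 2) (y + 1) + Vf b x (y + 1) = Vf b (x + 1) (y + 1 + 1) + Vf b (x + 1) y := by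
  unfold Vf
  have a1 := Af_shift b (x + 1) (y + 1)
  have a2 := Af_shift b x y
  have b1 := Bf_shift b (x + 1) (y + 1)
  have b2 := Bf_shift b x y
  have hc1 : ((x + 1 : ℕ) : ℤ) - ((y + 1 : ℕ) : ℤ) = (x : ℤ) - y := by push_cast; ring
  have hc2 : ((y + 1 : ℕ) : ℤ) - ((x + 1 : ℕ) : ℤ) = (y : ℤ) - x := by push_cast; ring
  rw [hc1] at a1
  rw [hc2] at b1
  rw [show (x + 1) + 1 = x + 2 from rfl] at a1 b1
  linarith [a1, a2, b1, b2]

lemma core (b : ℕ → ℝ) : ∀ p q M, p ≤ M → Wm b M p q = Vf b p q := by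
  intro p
  induction p using Nat.strong_induction_on with
  | _ p ih =>
    rcases p with _ | _ | p
    · intro q M _
      have h0 : Wm b M 0 q = 0 := by
        apply Finset.sum_eq_zero
        intro n hn
        rw [sol_speed b ee 0 n (by simp only [Finset.mem_Icc] at hn; omega), zero_mul]
      rw [h0, Vf_zero]
    · intro q M hM
      have h1 : Wm b M (0 + 1) q = sol b ee q 1 := by
        unfold Wm
        rw [Finset.sum_eq_single 1]
        · have : sol b ee (0 + 1) 1 = 1 := by
            rw [show (0 + 1 : ℕ) = 1 from rfl, sol_one' b ee 1 one_ne_zero,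
              sol_speed b ee 0 2 (by omega), sol_speed b ee 0 1 (by omega)]
            show 0 + sol b ee 0 0 - b 1 * 0 = 1
            rw [sol_bdry]
            unfold ee
            rw [if_pos rfl]
            ring
          rw [this, one_mul]
        · intro n hn hne
          rw [sol_speed b ee (0 + 1) n
            (by simp only [Finset.mem_Icc] at hn; omega), zero_mul]
        · intro hc
          exact absurd (Finset.mem_Icc.mpr ⟨le_rfl, by omega⟩) hc
      rw [h1, show (0 + 1 : ℕ) = 1 from rfl, Vf_one]
      rcases Nat.eq_zero_or_pos q with hq | hq
      · subst hq
        rw [sol_speed b ee 0 1 (by omega), Nat.cast_zero, Rk_neg b 0 le_rfl]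
      · unfold Rk
        rw [if_pos (by omega)]
        congr 1
    · intro q M hM
      rcases q with _ | q
      · have h0 : Wm b (M) (p + 1 + 1) 0 = 0 := by
          apply Finset.sum_eq_zero
          intro n hn
          rw [sol_speed b ee 0 n (by simp only [Finset.mem_Icc] at hn; omega), mul_zero]
        rw [h0]
        unfold Vf Af Bf
        simp
      · set M' := p + q + 4 with hM'
        have e0 : Wm b M (p + 1 + 1) (q + 1) = Wm b M' (p + 1 + 1) (q + 1) :=
          Wm_congr b M M' _ _ hM (by omega)
        have w := Wm_wave b M' (p + 1) (q + 1) (by omega) (by omega) (by omega) (by omega)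
        simp only [Nat.add_sub_cancel] at w
        have i1 := ih (p + 1) (by omega) (q + 1 + 1) M' (by omega)
        have i0 := ih p (by omega) (q + 1) M' (by omega)
        have iq := ih (p + 1) (by omega) q M' (by omega)
        have v := Vf_wave b p q
        rw [show p + 1 + 1 = p + 2 from rfl] at *
        linarith [e0, w, i1, i0, iq, v]

lemma hfext_sol (b : ℕ → ℝ) (T : ℕ) (hT : 1 ≤ T) (f : ℕ → ℝ) (fext : ℕ → ℝ)
    (hext : ∀ t, fext t =
      if t < T then f t else if T < t ∧ t < 2 * T then -f (2 * T - t) else 0)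
    (m : ℕ) (hm : m < 2 * T) :
    sol b fext m 1 = ∑ a ∈ Finset.range T,
      f a * (Rk b ((m : ℤ) - a) - Rk b ((m : ℤ) + a - 2 * T)) := by
  rw [sol_decomp b fext m 1]
  have ext : ∑ σ ∈ Finset.range (m + 1), fext σ * sol b ee (m - σ) 1
      = ∑ σ ∈ Finset.range (2 * T), fext σ * sol b ee (m - σ) 1 := by
    apply Finset.sum_subset
    · exact Finset.range_subset_range.mpr (by omega)
    · intro σ hσ hσ'
      simp only [Finset.mem_range] at hσ hσ'
      rw [Nat.sub_eq_zero_of_le (by omega), sol_speed b ee 0 1 (by omega), mul_zero]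
  rw [ext, Finset.range_eq_Ico,
    ← Finset.sum_Ico_consecutive _ (show 0 ≤ T by omega) (show T ≤ 2 * T by omega)]
  have first : ∑ σ ∈ Finset.Ico 0 T, fext σ * sol b ee (m - σ) 1
      = ∑ a ∈ Finset.range T, f a * Rk b ((m : ℤ) - a) := by
    rw [← Finset.range_eq_Ico]
    apply Finset.sum_congr rfl
    intro σ hσ
    simp only [Finset.mem_range] at hσ
    rw [hext σ, if_pos hσ, R_nat b m σ]
  have second : ∑ σ ∈ Finset.Ico T (2 * T), fext σ * sol b ee (m - σ) 1
      = ∑ a ∈ Finset.range T, f a * (- Rk b ((m : ℤ) + a - 2 * T)) := by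
    rw [Finset.sum_eq_sum_Ico_succ_bot (show T < 2 * T by omega)]
    have hT0 : fext T = 0 := by
      rw [hext T, if_neg (by omega), if_neg (by omega)]
    rw [hT0, zero_mul, zero_add]
    rw [show ∑ a ∈ Finset.range T, f a * (- Rk b ((m : ℤ) + a - 2 * T))
        = ∑ a ∈ Finset.Ico 0 T, f a * (- Rk b ((m : ℤ) + a - 2 * T)) from by
      rw [Finset.range_eq_Ico]]
    rw [Finset.sum_eq_sum_Ico_succ_bot (show 0 < T by omega)]
    rw [show f 0 * (- Rk b ((m : ℤ) + ((0:ℕ):ℤ) - 2 * T)) = 0 from by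
      rw [Rk_neg b _ (by push_cast; omega)]; ring]
    rw [zero_add]
    apply Finset.sum_nbij' (fun σ => 2 * T - σ) (fun a => 2 * T - a)
    · intro σ hσ
      simp only [Finset.mem_Ico] at hσ ⊢
      omega
    · intro a ha
      simp only [Finset.mem_Ico] at ha ⊢
      omega
    · intro σ hσ
      simp only [Finset.mem_Ico] at hσ
      omega
    · intro a ha
      simp only [Finset.mem_Ico] at ha
      omega
    · intro σ hσ
      simp only [Finset.mem_Ico] at hσ
      rw [hext σ, if_neg (by omega), if_pos (by omega), R_nat b m σ]
      have hc : ((2 * T - σ : ℕ) : ℤ) = 2 * (T : ℤ) - σ := by omega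
      rw [hc]
      have hc2 : (m : ℤ) + (2 * (T : ℤ) - σ) - 2 * T = (m : ℤ) - σ := by ring
      rw [hc2]
      ring
  rw [first, second, ← Finset.sum_add_distrib, Finset.range_eq_Ico]
  apply Finset.sum_congr rfl
  intro a _
  ring

end ConnOdd

open ConnOdd in
/-- The connecting form expressed through the response of the odd extension of `f`. -/
theorem connecting_via_odd_extension (b : ℕ → ℝ) (T : ℕ) (hT : 1 ≤ T) (f g : ℕ → ℝ)
    (hf : ∀ t, T ≤ t → f t = 0) (hg : ∀ t, T ≤ t → g t = 0)
    (fext : ℕ → ℝ)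
    (hext : ∀ t, fext t =
      if t < T then f t else if T < t ∧ t < 2 * T then -f (2 * T - t) else 0) :
    ∑ n ∈ Finset.Icc 1 T, sol b f T n * sol b g T n =
      ∑ τ ∈ Finset.range T, g τ * ∑ k ∈ Finset.range (T - τ), sol b fext (τ + 1 + 2 * k) 1 := by
  have hf' : f T = 0 := hf T le_rfl
  have hg' : g T = 0 := hg T le_rfl
  have dec : ∀ (h : ℕ → ℝ), h T = 0 → ∀ n, sol b h T n
      = ∑ a ∈ Finset.range T, h a * sol b ee (T - a) n := by
    intro h hT0 n
    rw [sol_decomp b h T n, Finset.sum_range_succ, hT0, zero_mul, add_zero]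
  have LHS_eq : ∑ n ∈ Finset.Icc 1 T, sol b f T n * sol b g T n
      = ∑ a ∈ Finset.range T, ∑ c ∈ Finset.range T, f a * g c * Wm b T (T - a) (T - c) := by
    have step1 : ∀ n, sol b f T n * sol b g T n
        = ∑ a ∈ Finset.range T, ∑ c ∈ Finset.range T,
            f a * g c * (sol b ee (T - a) n * sol b ee (T - c) n) := by
      intro n
      rw [dec f hf' n, dec g hg' n, Finset.sum_mul_sum]
      apply Finset.sum_congr rfl
      intro a _
      apply Finset.sum_congr rfl
      intro c _
      ring
    rw [Finset.sum_congr rfl (fun n _ => step1 n), Finset.sum_comm]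
    apply Finset.sum_congr rfl
    intro a _
    rw [Finset.sum_comm]
    apply Finset.sum_congr rfl
    intro c _
    rw [← Finset.mul_sum]
    unfold Wm
    rfl
  have RHS_eq : ∀ τ, τ < T → (∑ k ∈ Finset.range (T - τ), sol b fext (τ + 1 + 2 * k) 1)
      = ∑ a ∈ Finset.range T, f a * Vf b (T - a) (T - τ) := by
    intro τ hτ
    have hstep : ∀ k ∈ Finset.range (T - τ), sol b fext (τ + 1 + 2 * k) 1
        = ∑ a ∈ Finset.range T, f a *
            (Rk b (((τ + 1 + 2 * k : ℕ) : ℤ) - a) - Rk b (((τ + 1 + 2 * k : ℕ) : ℤ) + a - 2 * T)) := by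
      intro k hk
      simp only [Finset.mem_range] at hk
      exact hfext_sol b T hT f fext hext (τ + 1 + 2 * k) (by omega)
    rw [Finset.sum_congr rfl hstep, Finset.sum_comm]
    apply Finset.sum_congr rfl
    intro a ha
    have ha' : a < T := Finset.mem_range.mp ha
    unfold Vf Af Bf
    rw [← Finset.sum_sub_distrib, Finset.mul_sum]
    apply Finset.sum_congr rfl
    intro k hk
    have h1 : ((T - a : ℕ) : ℤ) - ((T - τ : ℕ) : ℤ) + 1 + 2 * (k : ℤ)
        = ((τ + 1 + 2 * k : ℕ) : ℤ) - a := by omega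
    have h2 : 2 * (k : ℤ) + 1 - ((T - a : ℕ) : ℤ) - ((T - τ : ℕ) : ℤ)
        = ((τ + 1 + 2 * k : ℕ) : ℤ) + a - 2 * T := by omega
    rw [h1, h2]
  rw [LHS_eq]
  have rhs1 : ∑ τ ∈ Finset.range T, g τ * ∑ k ∈ Finset.range (T - τ), sol b fext (τ + 1 + 2 * k) 1
      = ∑ τ ∈ Finset.range T, ∑ a ∈ Finset.range T, g τ * (f a * Vf b (T - a) (T - τ)) := by
    apply Finset.sum_congr rfl
    intro τ hτ
    rw [RHS_eq τ (Finset.mem_range.mp hτ), Finset.mul_sum]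
  rw [rhs1, Finset.sum_comm]
  apply Finset.sum_congr rfl
  intro a _
  apply Finset.sum_congr rfl
  intro c _
  rw [core b (T - c) (T - a) T (by omega)]
  ring
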